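/- Every l-dimensional subspace X of R^n contains a vector v with var(v) ≥ l - 1. -/

import Mathlib

open scoped BigOperators

/-- Number of sign changes between consecutive entries of a list of reals. -/
noncomputable def listVar : List ℝ → ℕ
  | a :: b :: t => (if a * b < 0 then 1 else 0) + listVar (b :: t)
  | _ => 0

/-- `var v` : the number of sign changes of `v`, ignoring zero entries. -/
noncomputable def var {n : ℕ} (v : Fin n → ℝ) : ℕ :=
  listVar ((List.ofFn v).filter (fun x => x ≠ 0))

/-- `varbar v` : the maximum of `var w` over all `w` agreeing with `v` on the
nonzero entries of `v`. -/
noncomputable def varbar {n : ℕ} (v : Fin n → ℝ) : ℕ :=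
  sSup {m | ∃ w : Fin n → ℝ, (∀ i, v i ≠ 0 → w i = v i) ∧ var w = m}

/-- `altv v = (v 0, -v 1, v 2, ...)`. -/
def altv {n : ℕ} (v : Fin n → ℝ) : Fin n → ℝ := fun i => (-1 : ℝ) ^ (i : ℕ) * v i

/-- A vector with entries in `{0, 1, -1}`, representing a sign vector. -/
def IsSignVec {n : ℕ} (σ : Fin n → ℝ) : Prop := ∀ i, σ i = 0 ∨ σ i = 1 ∨ σ i = -1

lemma listVar_cons_cons (a b : ℝ) (t : List ℝ) :
    listVar (a :: b :: t) = (if a * b < 0 then 1 else 0) + listVar (b :: t) := by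
  simp [listVar]

lemma listVar_nil : listVar [] = 0 := by simp [listVar]
lemma listVar_single (a : ℝ) : listVar [a] = 0 := by simp [listVar]

lemma indicator_tri {a b c : ℝ} (ha : a ≠ 0) (hb : b ≠ 0) (hc : c ≠ 0) :
    (if a * c < 0 then (1:ℕ) else 0) ≤
      (if a * b < 0 then (1:ℕ) else 0) + (if b * c < 0 then 1 else 0) := by
  by_cases h1 : a * c < 0
  · by_cases h2 : a * b < 0
    · simp [h1, h2]
    · by_cases h3 : b * c < 0
      · simp [h1, h2, h3]
      · exfalso
        have hab : 0 < a * b := lt_of_le_of_ne (not_lt.mp h2) (by simp [mul_eq_zero, ha, hb])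
        have hbc : 0 < b * c := lt_of_le_of_ne (not_lt.mp h3) (by simp [mul_eq_zero, hb, hc])
        nlinarith [mul_pos hab hbc, sq_nonneg b, h1]
  · simp [h1]

lemma listVar_le_cons (b : ℝ) (t : List ℝ) : listVar t ≤ listVar (b :: t) := by
  cases t with
  | nil => simp [listVar]
  | cons c t' => rw [listVar_cons_cons]; omega

lemma listVar_aux {s t : List ℝ} (h : s.Sublist t) :
    (∀ x ∈ t, x ≠ 0) → ∀ a : ℝ, a ≠ 0 → listVar (a :: s) ≤ listVar (a :: t) := by
  induction h with
  | slnil => intro _ a _; exact le_refl _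
  | @cons s t b h ih =>
    intro ht a ha
    have ht' : ∀ x ∈ t, x ≠ 0 := fun x hx => ht x (List.mem_cons_of_mem _ hx)
    refine (ih ht' a ha).trans ?_
    cases t with
    | nil => simp [listVar]
    | cons c t' =>
      rw [listVar_cons_cons a c, listVar_cons_cons a b, listVar_cons_cons b c]
      have := indicator_tri ha (ht b (by simp)) (ht c (by simp))
      omega
  | @cons_cons s t b h ih =>
    intro ht a ha
    rw [listVar_cons_cons, listVar_cons_cons]
    have hb : b ≠ 0 := ht b (by simp)
    have := ih (fun x hx => ht x (by simp [hx])) b hb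
    omega

lemma listVar_sublist {s t : List ℝ} (h : s.Sublist t) (ht : ∀ x ∈ t, x ≠ 0) :
    listVar s ≤ listVar t := by
  induction h with
  | slnil => exact le_refl _
  | @cons s t b h ih =>
    exact (ih fun x hx => ht x (by simp [hx])).trans (listVar_le_cons b _)
  | @cons_cons s t b h ih =>
    exact listVar_aux h (fun x hx => ht x (by simp [hx])) b (ht b (by simp))

lemma listVar_chain : ∀ (t : List ℝ), t.Chain' (fun a b => a * b < 0) →
    t.length - 1 ≤ listVar t := by
  intro t
  induction t with
  | nil => simp
  | cons a t ih =>
    intro h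
    cases t with
    | nil => simp
    | cons b t' =>
      rw [listVar_cons_cons, if_pos (List.isChain_cons_cons.mp h).1]
      have := ih (List.isChain_cons_cons.mp h).2
      simp only [List.length_cons] at this ⊢
      omega


lemma ofFn_comp_sublist {n l : ℕ} (f : Fin n → ℝ) (e : Fin l → Fin n) (he : StrictMono e) :
    List.Sublist (List.ofFn (f ∘ e)) (List.ofFn f) := by
  rw [List.ofFn_eq_map, List.ofFn_eq_map, ← List.map_map]
  apply List.Sublist.map
  apply List.sublist_of_subperm_of_pairwise (r := (· ≤ ·))
  · apply List.subperm_of_subset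
    · exact (List.nodup_finRange l).map he.injective
    · intro x _; exact List.mem_finRange x
  · exact (List.pairwise_map).mpr ((List.pairwise_lt_finRange l).imp fun h => (he h).le)
  · exact (List.pairwise_lt_finRange n).imp le_of_lt

lemma chain_alt (l : ℕ) : (List.ofFn (fun k : Fin l => ((-1:ℝ)) ^ (k:ℕ))).Chain'
    (fun a b => a * b < 0) := by
  rw [List.Chain', List.isChain_iff_getElem]
  intro i hi
  rw [List.getElem_ofFn, List.getElem_ofFn]
  simp only [Fin.coe_cast]
  have h1 : (-1:ℝ) ^ i * (-1) ^ (i+1) = -1 := by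
    rw [← pow_add]; exact Odd.neg_one_pow ⟨i, by ring⟩
  
  norm_num [h1]


lemma pivot : ∀ (n l : ℕ) (X : Submodule ℝ (Fin n → ℝ)), Module.finrank ℝ X = l →
    ∃ e : Fin l → Fin n, StrictMono e ∧ ∀ c : Fin l → ℝ, ∃ v ∈ X, ∀ k, v (e k) = c k := by
  intro n
  induction n with
  | zero =>
    intro l X hX
    have hl : l = 0 := by
      have : Module.finrank ℝ X = 0 := Module.finrank_zero_of_subsingleton
      omega
    subst hl
    exact ⟨Fin.elim0, fun i => i.elim0, fun c => ⟨0, X.zero_mem, fun k => k.elim0⟩⟩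
  | succ n ih =>
    intro l X hX
    set T : (Fin (n+1) → ℝ) →ₗ[ℝ] (Fin n → ℝ) :=
      LinearMap.funLeft ℝ ℝ (Fin.succ : Fin n → Fin (n+1)) with hTdef
    have hT_apply : ∀ (v : Fin (n+1) → ℝ) (i : Fin n), T v i = v i.succ := fun v i => rfl
    -- helper: finrank is preserved under T for subspaces with zero first coordinate
    have hmap : ∀ (K : Submodule ℝ (Fin (n+1) → ℝ)), (∀ v ∈ K, v 0 = 0) →
        Module.finrank ℝ (K.map T) = Module.finrank ℝ K := by
      intro K hK
      have hker : LinearMap.ker (T.comp K.subtype) = ⊥ := by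
        rw [LinearMap.ker_eq_bot']
        intro x hx
        apply Subtype.ext
        funext i
        induction i using Fin.cases with
        | zero => exact hK x.1 x.2
        | succ j =>
          exact congrFun hx j
      have h1 := LinearMap.finrank_range_add_finrank_ker (T.comp K.subtype)
      rw [hker, finrank_bot, add_zero] at h1
      rw [LinearMap.range_comp, Submodule.range_subtype] at h1
      exact h1
    by_cases h0 : ∀ v ∈ X, v 0 = 0
    · -- every vector vanishes at 0; push down to Fin n
      have hY : Module.finrank ℝ (X.map T) = l := by rw [hmap X h0, hX]
      obtain ⟨e', he', hs'⟩ := ih l (X.map T) hY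
      refine ⟨fun k => (e' k).succ, fun i j hij => Fin.succ_lt_succ_iff.mpr (he' hij), ?_⟩
      intro c
      obtain ⟨w, hw, hwc⟩ := hs' c
      obtain ⟨v, hv, rfl⟩ := hw
      exact ⟨v, hv, fun k => hwc k⟩
    · push_neg at h0
      obtain ⟨u, huX, hu0⟩ := h0
      -- l ≥ 1
      have hl : 1 ≤ l := by
        rw [← hX]
        have hne : (⟨u, huX⟩ : X) ≠ 0 := by
          intro h
          exact hu0 (congrFun (congrArg Subtype.val h) 0)
        have : Nontrivial X := nontrivial_of_ne _ _ hne
        exact Module.finrank_pos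
      obtain ⟨m, rfl⟩ : ∃ m, l = m + 1 := ⟨l - 1, by omega⟩
      -- normalize u
      set u' : Fin (n+1) → ℝ := (u 0)⁻¹ • u with hu'def
      have hu'X : u' ∈ X := X.smul_mem _ huX
      have hu'0 : u' 0 = 1 := by
        simp [hu'def, inv_mul_cancel₀ hu0]
      -- the kernel of the first coordinate functional on X
      set F : X →ₗ[ℝ] ℝ := (LinearMap.proj 0).comp X.subtype with hFdef
      have hFrank : Module.finrank ℝ (LinearMap.range F) = 1 := by
        have hle : Module.finrank ℝ (LinearMap.range F) ≤ 1 := by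
          simpa using Submodule.finrank_le (LinearMap.range F)
        have hpos : 0 < Module.finrank ℝ (LinearMap.range F) := by
          have hmem : u 0 ∈ LinearMap.range F := ⟨⟨u, huX⟩, rfl⟩
          have : Nontrivial (LinearMap.range F) :=
            nontrivial_of_ne ⟨u 0, hmem⟩ 0 (by simp [Subtype.ext_iff, hu0])
          exact Module.finrank_pos
        omega
      have hkerrank : Module.finrank ℝ (LinearMap.ker F) = m := by
        have h1 := LinearMap.finrank_range_add_finrank_ker F
        rw [hFrank, hX] at h1
        omega
      set K : Submodule ℝ (Fin (n+1) → ℝ) := (LinearMap.ker F).map X.subtype with hKdef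
      have hKrank : Module.finrank ℝ K = m := by
        rw [hKdef, Submodule.finrank_map_subtype_eq, hkerrank]
      have hKmem : ∀ v ∈ K, v ∈ X ∧ v 0 = 0 := by
        intro v hv
        obtain ⟨x, hx, rfl⟩ := hv
        exact ⟨x.2, congrArg id (LinearMap.mem_ker.mp hx)⟩
      have hYrank : Module.finrank ℝ (K.map T) = m := by
        rw [hmap K (fun v hv => (hKmem v hv).2), hKrank]
      obtain ⟨e', he', hs'⟩ := ih m (K.map T) hYrank
      refine ⟨Fin.cons 0 (fun k => (e' k).succ), ?_, ?_⟩
      · intro i j hij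
        induction i using Fin.cases with
        | zero =>
          induction j using Fin.cases with
          | zero => exact absurd hij (lt_irrefl _)
          | succ j' => simp [Fin.cons_zero, Fin.cons_succ, Fin.succ_pos]
        | succ i' =>
          induction j using Fin.cases with
          | zero => exact absurd hij (by simp [Fin.lt_def])
          | succ j' =>
            simp only [Fin.cons_succ]
            exact Fin.succ_lt_succ_iff.mpr (he' (by simpa [Fin.succ_lt_succ_iff] using hij))
      · intro c
        obtain ⟨w, hw, hwc⟩ := hs' (fun k => c k.succ - c 0 * u' ((e' k).succ))
        obtain ⟨z, hzK, rfl⟩ := hw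
        refine ⟨c 0 • u' + z, X.add_mem (X.smul_mem _ hu'X) (hKmem z hzK).1, ?_⟩
        intro k
        induction k using Fin.cases with
        | zero =>
          simp [Fin.cons_zero, hu'0, (hKmem z hzK).2]
        | succ k' =>
          have hz := hwc k'
          rw [hT_apply] at hz
          simp only [Fin.cons_succ, Pi.add_apply, Pi.smul_apply, smul_eq_mul, hz]
          ring

theorem stmt15 (n l : ℕ) (X : Submodule ℝ (Fin n → ℝ)) (hX : Module.finrank ℝ X = l) :
    ∃ v ∈ X, l - 1 ≤ var v := by
  obtain ⟨e, he, hs⟩ := pivot n l X hX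
  obtain ⟨v, hv, hve⟩ := hs (fun k => (-1) ^ (k : ℕ))
  refine ⟨v, hv, ?_⟩
  set L := List.ofFn (fun k : Fin l => ((-1:ℝ)) ^ (k : ℕ)) with hLdef
  have hL : List.ofFn (v ∘ e) = L := by
    rw [hLdef]; congr 1; funext k; exact hve k
  have hsub : List.Sublist L (List.ofFn v) := hL ▸ ofFn_comp_sublist v e he
  have hLnz : ∀ x ∈ L, x ≠ 0 := by
    intro x hx
    rw [hLdef, List.mem_ofFn] at hx
    obtain ⟨k, rfl⟩ := hx
    positivity
  have hfil : L.filter (fun x => x ≠ 0) = L := by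
    apply List.filter_eq_self.mpr
    intro x hx
    simpa using hLnz x hx
  have hsub2 : List.Sublist L ((List.ofFn v).filter (fun x => x ≠ 0)) := by
    rw [← hfil]
    exact hsub.filter _
  have hnz : ∀ x ∈ (List.ofFn v).filter (fun x => x ≠ 0), x ≠ 0 := by
    intro x hx
    simpa using (List.mem_filter.mp hx).2
  have h1 : listVar L ≤ var v := listVar_sublist hsub2 hnz
  have h2 : l - 1 ≤ listVar L := by
    have := listVar_chain L (chain_alt l)
    rwa [hLdef, List.length_ofFn] at this
  omega
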